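/- Let h_i(x) = x⁺ for every i ∈ 𝐈 and let M = max_{j∈𝐉} |G_j|. Then for every t ≥ 0 the ⪕-greatest element F(t) of A_t satisfies: min_{i∈𝐈} F_i(t) = t/M, and F_i(t) = t/M for every i belonging to some G_j with |G_j| = M. -/

import Mathlib

/-- The set of indices at which `a` attains its minimum. -/
noncomputable def argminSet {n : ℕ} (a : Fin n → ℝ) : Finset (Fin n) :=
  Finset.univ.filter (fun i => ∀ j, a i ≤ a j)

/-- The minimum entry of `a`. -/
noncomputable def minval {n : ℕ} (a : Fin n → ℝ) : ℝ := ⨅ i, a i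

/-- The restriction of `a` to the indices in `S`, reindexed by `Fin S.card`
in increasing order. -/
noncomputable def restrictVec {n : ℕ} (S : Finset (Fin n)) (a : Fin n → ℝ) :
    Fin S.card → ℝ :=
  fun i => a (S.orderIsoOfFin rfl i).1

/-- The "min-sensitive" partial order `⪕` on `ℝⁿ` (Definition 1 of the paper):
for `n = 1` it is the usual order; for `n ≥ 2`, `a ⪕ b` iff (i) `a = b`, or
(ii) `min a < min b`, or (iii) `min a = min b` and `Argmin b ⊊ Argmin a`, or
(iv) `min a = min b`, `Argmin a = Argmin b ⊊ {1,...,n}` and the restrictions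
of `a` and `b` to the complement of the common argmin set are related. -/
noncomputable def msLE : (n : ℕ) → (Fin n → ℝ) → (Fin n → ℝ) → Prop
  | 0, _, _ => True
  | 1, a, b => a 0 ≤ b 0
  | n + 2, a, b =>
    a = b ∨
    minval a < minval b ∨
    (minval a = minval b ∧ argminSet b ⊂ argminSet a) ∨
    (minval a = minval b ∧ argminSet a = argminSet b ∧ argminSet a ⊂ Finset.univ ∧
      msLE ((argminSet a)ᶜ).card (restrictVec (argminSet a)ᶜ a) (restrictVec (argminSet a)ᶜ b))
termination_by n => n
decreasing_by
  have hne : (argminSet a).Nonempty := by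
    obtain ⟨i, -, hi⟩ := Finset.exists_min_image Finset.univ a ⟨0, Finset.mem_univ 0⟩
    refine ⟨i, ?_⟩
    unfold argminSet
    exact Finset.mem_filter.mpr ⟨Finset.mem_univ i, fun j => hi j (Finset.mem_univ j)⟩
  have h1 : 0 < (argminSet a).card := Finset.card_pos.mpr hne
  have h2 : ((argminSet a)ᶜ).card = Fintype.card (Fin (n + 2)) - (argminSet a).card :=
    Finset.card_compl _
  simp only [Fintype.card_fin] at h2
  omega

/-- `x*_i`: the supremum of the zero set of a function. -/
noncomputable def xstar (f : ℝ → ℝ) : ℝ := sSup {x | f x = 0}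

/-- The admissible set `A_t`. -/
def admissible (I J : ℕ) (h : Fin I → ℝ → ℝ) (G : Fin J → Finset (Fin I)) (t : ℝ) :
    Set (Fin I → ℝ) :=
  {a | (∀ i, a i ≤ t) ∧ ∀ j, (∑ i ∈ G j, h i (a i)) ≤ t}

/-- `F` is the `⪕`-greatest element of `A_t`. -/
def IsGreatestMS (I J : ℕ) (h : Fin I → ℝ → ℝ) (G : Fin J → Finset (Fin I)) (t : ℝ)
    (F : Fin I → ℝ) : Prop :=
  F ∈ admissible I J h G t ∧ ∀ a ∈ admissible I J h G t, msLE I a F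

/-- Example 1 of the paper: for `h_i(x) = x⁺` and
`M = max_j |G_j|`, the `⪕`-greatest element `F(t)` of `A_t` satisfies
`min_i F_i(t) = t / M`, and `F_i(t) = t / M` whenever `i` belongs to a group of
maximal cardinality. -/
lemma msLE_const_le : ∀ {n : ℕ}, 0 < n → ∀ (c : ℝ) (b : Fin n → ℝ),
    msLE n (fun _ => c) b → c ≤ minval b
  | 0, hn, _, _, _ => absurd hn (by omega)
  | 1, _, c, b, h => by
      simp only [msLE] at h
      have : minval b = b default := ciInf_unique
      rw [this]; exact h
  | (n+2), _, c, b, h => by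
      have hc : minval (fun _ : Fin (n+2) => c) = c := ciInf_const
      simp only [msLE] at h
      rcases h with h | h | ⟨h, -⟩ | ⟨h, -⟩
      · rw [← h, hc]
      · rw [hc] at h; exact h.le
      · rw [hc] at h; exact h.le
      · rw [hc] at h; exact h.le

theorem F_example_linear
    (I J : ℕ) (hI : 0 < I) (hJ : 0 < J)
    (G : Fin J → Finset (Fin I))
    (hGinj : Function.Injective G)
    (hGne : ∀ j, (G j).Nonempty)
    (hGcover : ∀ i, ∃ j, i ∈ G j)
    (t : ℝ) (ht : 0 ≤ t)
    (F : Fin I → ℝ)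
    (hF : IsGreatestMS I J (fun _ x => max x 0) G t F) :
    minval F = t / (Finset.univ.sup fun j => (G j).card : ℕ) ∧
    ∀ j : Fin J, (G j).card = (Finset.univ.sup fun j' => (G j').card) →
      ∀ i ∈ G j, F i = t / (Finset.univ.sup fun j' => (G j').card : ℕ) := by
  haveI : Nonempty (Fin I) := ⟨⟨0, hI⟩⟩
  haveI : Nonempty (Fin J) := ⟨⟨0, hJ⟩⟩
  set M : ℕ := Finset.univ.sup fun j => (G j).card with hMdef
  have hM1 : 1 ≤ M := by
    have := Finset.le_sup (f := fun j => (G j).card) (Finset.mem_univ (Classical.arbitrary (Fin J)))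
    have h2 := Finset.card_pos.mpr (hGne (Classical.arbitrary (Fin J)))
    rw [hMdef]
    exact le_trans h2 this
  have hMpos : (0 : ℝ) < (M : ℕ) := by exact_mod_cast hM1
  have hMne : (M : ℝ) ≠ 0 := ne_of_gt hMpos
  have htM : 0 ≤ t / M := div_nonneg ht hMpos.le
  -- minval F ≤ F i
  have hbdd : BddBelow (Set.range F) := (Set.finite_range F).bddBelow
  have hmin_le : ∀ i, minval F ≤ F i := fun i => ciInf_le hbdd i
  -- each term in a group sum with min F ≥ t/M is ≥ t/M
  -- lower bound: the constant vector t/M is admissible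
  have hconst : (fun _ : Fin I => t / M) ∈ admissible I J (fun _ x => max x 0) G t := by
    constructor
    · intro i
      exact div_le_self ht (by exact_mod_cast hM1)
    · intro j
      have : ∀ i ∈ G j, max (t / M) 0 = t / M := fun i _ => max_eq_left htM
      rw [Finset.sum_congr rfl this, Finset.sum_const, nsmul_eq_mul]
      calc ((G j).card : ℝ) * (t / M) ≤ (M : ℝ) * (t / M) := by
            apply mul_le_mul_of_nonneg_right _ htM
            exact_mod_cast Finset.le_sup (f := fun j' => (G j').card) (Finset.mem_univ j)
        _ = t := mul_div_cancel₀ t hMne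
  have hlow : t / M ≤ minval F := msLE_const_le hI _ F (hF.2 _ hconst)
  -- choose a group of maximal cardinality
  obtain ⟨j0, -, hj0⟩ := Finset.exists_mem_eq_sup Finset.univ Finset.univ_nonempty
    (fun j => (G j).card)
  -- upper bound from the constraint of a maximal group
  have hub : minval F ≤ t / M := by
    have hsum := hF.1.2 j0
    have hterm : ∀ i ∈ G j0, minval F ≤ max (F i) 0 :=
      fun i _ => le_trans (hmin_le i) (le_max_left _ _)
    have : (M : ℝ) * minval F ≤ t := by
      calc (M : ℝ) * minval F = ∑ _i ∈ G j0, minval F := by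
            rw [Finset.sum_const, nsmul_eq_mul, ← hj0]
        _ ≤ ∑ i ∈ G j0, max (F i) 0 := Finset.sum_le_sum hterm
        _ ≤ t := hsum
    rw [le_div_iff₀ hMpos, mul_comm]; exact this
  have hmin : minval F = t / M := le_antisymm hub hlow
  refine ⟨hmin, ?_⟩
  intro j hj i hi
  -- F i = t/M for i in a maximal group
  have hsum := hF.1.2 j
  have hFi_ge : t / M ≤ F i := hmin ▸ hmin_le i
  refine le_antisymm ?_ hFi_ge
  by_contra hgt
  push_neg at hgt
  have hterm : ∀ k ∈ (G j).erase i, t / M ≤ max (F k) 0 :=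
    fun k _ => le_trans (hmin ▸ hmin_le k) (le_max_left _ _)
  have h1 : ((G j).erase i).card • (t / M) ≤ ∑ k ∈ (G j).erase i, max (F k) 0 := by
    rw [← Finset.sum_const]
    exact Finset.sum_le_sum hterm
  have hcard : ((G j).erase i).card = M - 1 := by rw [Finset.card_erase_of_mem hi, hj]
  have h2 : ∑ k ∈ (G j).erase i, max (F k) 0 + max (F i) 0 = ∑ k ∈ G j, max (F k) 0 :=
    Finset.sum_erase_add _ _ hi
  have hFimax : max (F i) 0 = F i := max_eq_left (le_trans htM hFi_ge)
  have hcast : ((M - 1 : ℕ) : ℝ) = (M : ℝ) - 1 := by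
    rw [Nat.cast_sub hM1]; norm_num
  have : ((M : ℝ) - 1) * (t / M) + F i ≤ t := by
    calc ((M : ℝ) - 1) * (t / M) + F i
        = ((G j).erase i).card • (t / M) + max (F i) 0 := by
          rw [hcard, nsmul_eq_mul, hcast, hFimax]
      _ ≤ ∑ k ∈ (G j).erase i, max (F k) 0 + max (F i) 0 := by
          exact add_le_add_left h1 _
      _ = ∑ k ∈ G j, max (F k) 0 := h2
      _ ≤ t := hsum
  have : F i ≤ t / M := by
    have hexp : ((M : ℝ) - 1) * (t / M) = t - t / M := by
      field_simp
    linarith [this, hexp ▸ this]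
  linarith
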